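/- For every integer n ≥ 2, the negative continued fraction [-2, -4, -2, ..., -2] (with n-1 trailing entries equal to -2, i.e. k = n) equals -1 - (2n+1)/(3n+1), and the Giroux–Honda product equals 6. -/

import Mathlib

/-- Evaluation of a negative continued fraction [r₀, r₁, ..., r_k] =
r₀ - 1/(r₁ - 1/(r₂ - ... - 1/r_k)). -/
def ncf : List ℚ → ℚ
  | [] => 0
  | [r] => r
  | r :: s :: rest => r - 1 / ncf (s :: rest)

/-- The Giroux–Honda count |(r₀+1)(r₁+1)···(r_{k-1}+1)·r_k|. -/
def ghCount (l : List ℚ) : ℚ :=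
  |((l.dropLast.map (fun r => r + 1)).prod) * l.getLastD 0|

lemma ncf_rep (m : ℕ) : ncf (List.replicate (m + 1) (-2)) = -((m : ℚ) + 2) / ((m : ℚ) + 1) := by
  induction m with
  | zero => show ncf [-2] = _; norm_num [ncf]
  | succ k ih =>
    have h1 : List.replicate (k + 2) ((-2 : ℚ)) = (-2) :: List.replicate (k + 1) (-2) := rfl
    have h2 : List.replicate (k + 1) ((-2 : ℚ)) = (-2) :: List.replicate k (-2) := rfl
    rw [h1, h2, ncf, ← h2, ih, one_div_div, div_neg, sub_neg_eq_add]
    have hk : ((k : ℚ) + 1) ≠ 0 := by positivity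
    have hk2 : ((k : ℚ) + 2) ≠ 0 := by positivity
    push_cast
    field_simp
    ring

lemma gl (m : ℕ) : (((-2 : ℚ)) :: (-4) :: List.replicate (m + 1) (-2)).getLastD 0 = -2 := by
  induction m with
  | zero => rfl
  | succ k ih => simpa [List.replicate_succ, List.getLastD] using ih

theorem stmt16 (n : ℕ) (hn : 2 ≤ n) :
    ncf ((-2) :: (-4) :: List.replicate (n - 1) (-2)) =
      -1 - (2 * (n : ℚ) + 1) / (3 * (n : ℚ) + 1) ∧
    ghCount ((-2) :: (-4) :: List.replicate (n - 1) (-2)) = 6 := by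
  obtain ⟨m, rfl⟩ : ∃ m, n = m + 2 := ⟨n - 2, by omega⟩
  have hrep : (m + 2) - 1 = m + 1 := rfl
  rw [hrep]
  have hm1 : ((m : ℚ) + 1) ≠ 0 := by positivity
  have hm2 : ((m : ℚ) + 2) ≠ 0 := by positivity
  have hm3 : (3 * (m : ℚ) + 7) ≠ 0 := by positivity
  constructor
  · have h2 : List.replicate (m + 1) ((-2 : ℚ)) = (-2) :: List.replicate m (-2) := rfl
    have e1 : ncf ((-4) :: List.replicate (m + 1) (-2)) =
        -(3 * (m : ℚ) + 7) / ((m : ℚ) + 2) := by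
      rw [h2, ncf, ← h2, ncf_rep, one_div_div, div_neg, sub_neg_eq_add]
      field_simp
      ring
    rw [show ((-2 : ℚ) :: (-4) :: List.replicate (m + 1) (-2)) =
      (-2) :: ((-4) :: List.replicate (m + 1) (-2)) from rfl, ncf, e1,
      one_div_div, div_neg, sub_neg_eq_add]
    have h4 : (3 * ((m : ℚ) + 2) + 1) ≠ 0 := by positivity
    push_cast
    field_simp
    ring
  · unfold ghCount
    have hd : (((-2 : ℚ)) :: (-4) :: List.replicate (m + 1) (-2)).dropLast
        = (-2) :: (-4) :: List.replicate m (-2) := by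
      simp [List.dropLast, List.dropLast_replicate]
    have hl : (((-2 : ℚ)) :: (-4) :: List.replicate (m + 1) (-2)).getLastD 0 = -2 :=
      gl m
    rw [hd, hl]
    simp only [List.map_cons, List.map_replicate, List.prod_cons, List.prod_replicate]
    norm_num
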